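/- Let k_1,…,k_m, q ∈ R^d be unit vectors, γ > 0, and let τ be the sparsemax threshold for the score vector z with z_i = ⟨k_i,q⟩/γ, so that Σ_i [z_i − τ]_+ = 1. Set h = √(2 − 2γτ) (assuming 2 − 2γτ > 0). Then for each i, sparsemax(z)_i = [1 − ‖k_i − q‖²/h²]_+ · (h²/(2γ)), so the sparsemax attention weights are proportional to Epanechnikov kernel evaluations [1 − ‖k_i − q‖²/h²]_+. -/

import Mathlib

open scoped RealInnerProductSpace

theorem stmt7 (d m : ℕ) (k : Fin m → EuclideanSpace ℝ (Fin d))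
    (q : EuclideanSpace ℝ (Fin d)) (γ : ℝ) (hγ : 0 < γ)
    (hk : ∀ i, ‖k i‖ = 1) (hq : ‖q‖ = 1)
    (z : Fin m → ℝ) (hz : ∀ i, z i = ⟪k i, q⟫ / γ)
    (τ : ℝ) (hτ : ∑ i, max (z i - τ) 0 = 1)
    (hpos : 0 < 2 - 2 * γ * τ)
    (h : ℝ) (hh : h = Real.sqrt (2 - 2 * γ * τ)) :
    ∀ i, max (z i - τ) 0 = max (1 - ‖k i - q‖^2 / h^2) 0 * (h^2 / (2 * γ)) := by
  intro i
  have hsq : h ^ 2 = 2 - 2 * γ * τ := by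
    rw [hh, Real.sq_sqrt hpos.le]
  have hnorm : ‖k i - q‖ ^ 2 = 2 - 2 * ⟪k i, q⟫ := by
    rw [norm_sub_sq_real, hk i, hq]; ring
  have hc : 0 ≤ h ^ 2 / (2 * γ) := by positivity
  rw [max_mul_of_nonneg _ _ hc, zero_mul]
  congr 1
  rw [hnorm, hz i]
  have h2 : h ^ 2 ≠ 0 := by rw [hsq]; linarith
  field_simp
  rw [hsq]
  have h3 : (1 - γ * τ) ≠ 0 := by linarith
  field_simp
  ring
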